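/- Fix an integer m ≥ 1 and a real p. Define P : (ZMod 3) × (ZMod 3) → ℝ by P(0,0) = p and P(i,j) = (1−p)/8 otherwise, let r : (ZMod 3) × (ZMod 3) → ℝ satisfy Σ_{i,j} r(i,j) = 1, and set A_m = ((3p+1)/4)^m, B_m = ((9p−1)/8)^m, C_m = (3(1−p)/8)^m. Then for every t ∈ ZMod 3, the sum, over all tuples ((x₀,z₀),(x₁,z₁),…,(x_m,z_m)) ∈ ((ZMod 3) × (ZMod 3))^{m+1} satisfying z₁ = z₂ = ⋯ = z_m, z₀ − z₁ = t, x₀ = 0, and x₁ + ⋯ + x_m = 0 in ZMod 3, of r(x₀,z₀)·∏_{k=1}^m P(x_k,z_k), equals (1/3)·[r(0,t)·(A_m + 2B_m) + (r(0,t+1) + r(0,t+2))·C_m]. -/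

import Mathlib

lemma sum3 (f : ZMod 3 → ℝ) : ∑ x : ZMod 3, f x = f 0 + f 1 + f 2 := by
  show ∑ x : Fin 3, f x = _
  exact Fin.sum_univ_three f

lemma keyF (g : ZMod 3 → ℝ) (hgg : g 1 = g 2) (m : ℕ) :
    ∀ s : ZMod 3,
    (∑ x : Fin m → ZMod 3, if (∑ k, x k) = s then ∏ k, g (x k) else 0)
      = if s = 0 then ((g 0 + 2*g 1)^m + 2*(g 0 - g 1)^m)/3
        else ((g 0 + 2*g 1)^m - (g 0 - g 1)^m)/3 := by
  induction m with
  | zero =>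
    intro s
    rcases (by decide : ∀ s : ZMod 3, s = 0 ∨ s = 1 ∨ s = 2) s with rfl | rfl | rfl <;>
      simp <;>
      norm_num [show ¬((0:ZMod 3) = 2) from by decide, show ¬((2:ZMod 3) = 0) from by decide]
  | succ n ih =>
    intro s
    rw [← (Fin.consEquiv (fun _ : Fin (n+1) => ZMod 3)).sum_comp
        (fun x => if (∑ k, x k) = s then ∏ k, g (x k) else 0)]
    rw [Fintype.sum_prod_type]
    have step : ∀ a : ZMod 3,
        (∑ x : Fin n → ZMod 3,
          if (∑ k, (Fin.consEquiv (fun _ : Fin (n+1) => ZMod 3)) (a, x) k) = s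
          then ∏ k, g ((Fin.consEquiv (fun _ : Fin (n+1) => ZMod 3)) (a, x) k) else 0)
        = g a * (if s - a = 0 then ((g 0 + 2*g 1)^n + 2*(g 0 - g 1)^n)/3
            else ((g 0 + 2*g 1)^n - (g 0 - g 1)^n)/3) := by
      intro a
      rw [← ih (s - a), Finset.mul_sum]
      apply Finset.sum_congr rfl
      intro x _
      simp only [Fin.consEquiv_apply, Fin.sum_cons, Fin.prod_univ_succ, Fin.cons_zero,
        Fin.cons_succ, mul_ite, mul_zero]
      exact if_congr ⟨fun h => eq_sub_of_add_eq' h, fun h => by rw [h]; ring⟩ rfl rfl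
    rw [Finset.sum_congr rfl (fun a _ => step a), sum3 (fun a => g a * _)]
    have h3 : s = 0 ∨ s = 1 ∨ s = 2 := by exact (by decide : ∀ s : ZMod 3, s = 0 ∨ s = 1 ∨ s = 2) s
    rcases h3 with rfl | rfl | rfl
    · rw [if_pos (by decide : (0:ZMod 3) - 0 = 0), if_neg (by decide : ¬((0:ZMod 3) - 1 = 0)),
        if_neg (by decide : ¬((0:ZMod 3) - 2 = 0)), if_pos rfl, ← hgg]
      ring
    · rw [if_neg (by decide : ¬((1:ZMod 3) - 0 = 0)), if_pos (by decide : (1:ZMod 3) - 1 = 0),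
        if_neg (by decide : ¬((1:ZMod 3) - 2 = 0)), if_neg (by decide : ¬((1:ZMod 3) = 0)), ← hgg]
      ring
    · rw [if_neg (by decide : ¬((2:ZMod 3) - 0 = 0)), if_neg (by decide : ¬((2:ZMod 3) - 1 = 0)),
        if_pos (by decide : (2:ZMod 3) - 2 = 0), if_neg (by decide : ¬((2:ZMod 3) = 0)), ← hgg]
      ring

/-- Appendix A: the unnormalized joint probability `E[δ_{0t}]` that an
`m`-carrier qutrit purification round succeeds with output Bell label `(0,t)`:
the sum over configurations with `z₁ = ⋯ = z_m`, `z₀ − z₁ = t`, `x₀ = 0` and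
`x₁ + ⋯ + x_m = 0 (mod 3)` of `r(x₀,z₀)·∏_k P(x_k,z_k)` equals
`(1/3)[r(0,t)(A_m + 2B_m) + (r(0,t+1) + r(0,t+2))C_m]`. -/
theorem mcaepp_joint_probability_s0 (m : ℕ) (hm : 1 ≤ m) (p : ℝ)
    (P : ZMod 3 × ZMod 3 → ℝ)
    (hP0 : P (0, 0) = p) (hP : ∀ x : ZMod 3 × ZMod 3, x ≠ (0, 0) → P x = (1 - p) / 8)
    (r : ZMod 3 × ZMod 3 → ℝ) (hr : ∑ x : ZMod 3 × ZMod 3, r x = 1)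
    (t : ZMod 3) :
    ∑ e ∈ Finset.univ.filter
        (fun e : (ZMod 3 × ZMod 3) × (Fin m → ZMod 3 × ZMod 3) =>
          (∀ i j : Fin m, (e.2 i).2 = (e.2 j).2) ∧
          (∀ i : Fin m, e.1.2 - (e.2 i).2 = t) ∧
          e.1.1 = 0 ∧
          ∑ k : Fin m, (e.2 k).1 = 0),
        r e.1 * ∏ k : Fin m, P (e.2 k)
      = (1 / 3) * (r (0, t) * (((3 * p + 1) / 4) ^ m + 2 * ((9 * p - 1) / 8) ^ m)
          + (r (0, t + 1) + r (0, t + 2)) * ((3 * (1 - p)) / 8) ^ m) := by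
  set i0 : Fin m := ⟨0, hm⟩ with hi0
  have hbij :
      (∑ e ∈ Finset.univ.filter
        (fun e : (ZMod 3 × ZMod 3) × (Fin m → ZMod 3 × ZMod 3) =>
          (∀ i j : Fin m, (e.2 i).2 = (e.2 j).2) ∧
          (∀ i : Fin m, e.1.2 - (e.2 i).2 = t) ∧
          e.1.1 = 0 ∧
          ∑ k : Fin m, (e.2 k).1 = 0),
        r e.1 * ∏ k : Fin m, P (e.2 k))
      = ∑ zx ∈ Finset.univ.filter
          (fun zx : ZMod 3 × (Fin m → ZMod 3) => ∑ k, zx.2 k = 0),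
          r (0, t + zx.1) * ∏ k, P (zx.2 k, zx.1) := by
    refine Finset.sum_nbij'
      (i := fun e => ((e.2 i0).2, fun k => (e.2 k).1))
      (j := fun zx => ((((0 : ZMod 3), t + zx.1), fun k => (zx.2 k, zx.1)) :
        (ZMod 3 × ZMod 3) × (Fin m → ZMod 3 × ZMod 3)))
      ?_ ?_ ?_ ?_ ?_
    · intro e he
      simp only [Finset.mem_filter, Finset.mem_univ, true_and] at he ⊢
      exact he.2.2.2
    · intro zx hzx
      simp only [Finset.mem_filter, Finset.mem_univ, true_and] at hzx
      rw [Finset.mem_filter]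
      exact ⟨Finset.mem_univ _, fun i j => rfl, fun i => by ring, rfl, hzx⟩
    · intro e he
      simp only [Finset.mem_filter, Finset.mem_univ, true_and] at he
      obtain ⟨hc1, hc2, hc3, hc4⟩ := he
      refine Prod.ext ?_ ?_
      · refine Prod.ext hc3.symm ?_
        have h := hc2 i0
        show t + (e.2 i0).2 = e.1.2
        rw [← h]; ring
      · funext k
        exact Prod.ext rfl (hc1 i0 k)
    · intro zx hzx
      rfl
    · intro e he
      simp only [Finset.mem_filter, Finset.mem_univ, true_and] at he
      obtain ⟨hc1, hc2, hc3, hc4⟩ := he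
      have he1 : e.1 = ((0 : ZMod 3), t + (e.2 i0).2) := by
        refine Prod.ext hc3 ?_
        have h := hc2 i0
        show e.1.2 = t + (e.2 i0).2
        rw [← h]; ring
      rw [he1]
      congr 1
      apply Finset.prod_congr rfl
      intro k _
      congr 1
      exact Prod.ext rfl (hc1 k i0)
  rw [hbij, Finset.sum_filter, Fintype.sum_prod_type]
  have hz : ∀ z : ZMod 3,
      (∑ x : Fin m → ZMod 3,
        if (∑ k, x k) = 0 then r (0, t + z) * ∏ k, P (x k, z) else 0)
      = r (0, t + z) *
        (((fun a => P (a, z)) 0 + 2 * (fun a => P (a, z)) 1) ^ m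
          + 2 * ((fun a => P (a, z)) 0 - (fun a => P (a, z)) 1) ^ m) / 3 := by
    intro z
    have hgg : (fun a => P (a, z)) 1 = (fun a => P (a, z)) 2 := by
      simp only []
      rcases eq_or_ne z 0 with rfl | hz0
      · rw [hP (1, 0) (by decide), hP (2, 0) (by decide)]
      · rw [hP (1, z) (by simp [hz0, Prod.ext_iff]), hP (2, z) (by simp [hz0, Prod.ext_iff])]
    have := keyF (fun a => P (a, z)) hgg m 0
    rw [if_pos rfl] at this
    calc (∑ x : Fin m → ZMod 3,
        if (∑ k, x k) = 0 then r (0, t + z) * ∏ k, P (x k, z) else 0)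
        = r (0, t + z) * (∑ x : Fin m → ZMod 3,
            if (∑ k, x k) = 0 then ∏ k, (fun a => P (a, z)) (x k) else 0) := by
          rw [Finset.mul_sum]
          exact Finset.sum_congr rfl fun x _ => by rw [mul_ite, mul_zero]
      _ = _ := by rw [this]; ring
  rw [Finset.sum_congr rfl (fun z _ => hz z), sum3]
  simp only []
  have e0 : P ((0:ZMod 3), (0:ZMod 3)) = p := hP0
  have e1 : P ((1:ZMod 3), (0:ZMod 3)) = (1-p)/8 := hP _ (by decide)
  have e01 : P ((0:ZMod 3), (1:ZMod 3)) = (1-p)/8 := hP _ (by decide)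
  have e11 : P ((1:ZMod 3), (1:ZMod 3)) = (1-p)/8 := hP _ (by decide)
  have e02 : P ((0:ZMod 3), (2:ZMod 3)) = (1-p)/8 := hP _ (by decide)
  have e12 : P ((1:ZMod 3), (2:ZMod 3)) = (1-p)/8 := hP _ (by decide)
  rw [e0, e1, e01, e11, e02, e12, add_zero]
  have h1 : p + 2 * ((1-p)/8) = (3*p+1)/4 := by ring
  have h2 : p - (1-p)/8 = (9*p-1)/8 := by ring
  have h3 : (1-p)/8 + 2*((1-p)/8) = 3*(1-p)/8 := by ring
  have h4 : (1-p)/8 - (1-p)/8 = 0 := by ring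
  rw [h1, h2, h3, h4, zero_pow (by omega : m ≠ 0)]
  ring
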